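/- Threshold determination for ℓ1 projection: let w*_1 ≥ w*_2 ≥ ... ≥ w*_d ≥ 0 be the sorted absolute values of the entries of w, with ‖w‖_1 > τ > 0, and let k be an index such that Σ_{j=1}^{k−1}(w*_j − w*_k) ≤ τ ≤ Σ_{j=1}^{k}(w*_j − w*_{k+1}) (with w*_{d+1} := 0). Then μ = w*_k + k^{−1}( Σ_{j=1}^{k−1}(w*_j − w*_k) − τ ) satisfies μ ≥ 0 and Σ_{j=1}^d (w*_j − μ)_+ = τ. -/

import Mathlib

open scoped Classical ENNReal NNReal

noncomputable def pNormOn (p : ℝ≥0∞) [Fact (1 ≤ p)] {ι : Type*} [Fintype ι] (v : ι → ℝ) : ℝ :=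
  ‖(WithLp.equiv p (ι → ℝ)).symm v‖

noncomputable def grpNorm {d : ℕ} (p : ℝ≥0∞) [Fact (1 ≤ p)] (G : Finset (Fin d))
    (x : Fin d → ℝ) : ℝ :=
  pNormOn p (fun j : {j : Fin d // j ∈ G} => x j.1)

def embed {d : ℕ} (G : Finset (Fin d)) (v : {j : Fin d // j ∈ G} → ℝ) : Fin d → ℝ :=
  fun j => if h : j ∈ G then v ⟨j, h⟩ else 0

noncomputable def Omega {d B : ℕ} (p : ℝ≥0∞) [Fact (1 ≤ p)] (G : Fin B → Finset (Fin d))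
    (x : Fin d → ℝ) : ℝ :=
  sInf { s | ∃ v : (r : Fin B) → {j : Fin d // j ∈ G r} → ℝ,
    (∑ r, embed (G r) (v r)) = x ∧ s = ∑ r, pNormOn p (v r) }

noncomputable def nrm2 {d : ℕ} (x : Fin d → ℝ) : ℝ := Real.sqrt (∑ j, (x j) ^ 2)

/-- Threshold determination for the ℓ1 projection: with `ws` the nonincreasing rearrangement
of the absolute values (0-based, padded with zeros beyond `d`), the explicit `μ` is
nonnegative and satisfies `Σ_j (ws_j - μ)₊ = τ`. -/
theorem stmt12 {d : ℕ} (ws : ℕ → ℝ) (hmono : ∀ i j : ℕ, i ≤ j → ws j ≤ ws i)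
    (hnonneg : ∀ j, 0 ≤ ws j) (hpad : ∀ j, d ≤ j → ws j = 0)
    (τ : ℝ) (hτ : 0 < τ) (hbig : τ < ∑ j ∈ Finset.range d, ws j)
    (k : ℕ) (hk : k < d)
    (hlow : ∑ j ∈ Finset.range k, (ws j - ws k) ≤ τ)
    (hhigh : τ ≤ ∑ j ∈ Finset.range (k + 1), (ws j - ws (k + 1))) :
    let μ : ℝ := ws k + ((∑ j ∈ Finset.range k, (ws j - ws k)) - τ) / (k + 1)
    0 ≤ μ ∧ ∑ j ∈ Finset.range d, max (ws j - μ) 0 = τ := by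
  intro μ
  set A := ∑ j ∈ Finset.range k, ws j with hA
  have hk1 : (0 : ℝ) < (k : ℝ) + 1 := by positivity
  have hlow' : A - k * ws k ≤ τ := by
    simpa [Finset.sum_sub_distrib, Finset.sum_const, Finset.card_range, nsmul_eq_mul,
      ← hA] using hlow
  have hhigh' : τ ≤ A + ws k - ((k : ℝ) + 1) * ws (k + 1) := by
    have := hhigh
    rw [Finset.sum_sub_distrib, Finset.sum_const, Finset.card_range,
      Finset.sum_range_succ] at this
    rw [nsmul_eq_mul] at this
    push_cast at this
    linarith
  have hμdef : μ = ws k + ((A - k * ws k) - τ) / ((k : ℝ) + 1) := by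
    simp only [μ, Finset.sum_sub_distrib, Finset.sum_const, Finset.card_range, nsmul_eq_mul,
      ← hA]
  have hμ_eq : ((k : ℝ) + 1) * μ = ws k + A - τ := by
    rw [hμdef]; field_simp; ring
  have hμ_le : μ ≤ ws k := by nlinarith
  have hμ_ge : ws (k + 1) ≤ μ := by nlinarith
  have hμ0 : 0 ≤ μ := le_trans (hnonneg (k + 1)) hμ_ge
  refine ⟨hμ0, ?_⟩
  have hsplit : ∑ j ∈ Finset.range d, max (ws j - μ) 0
      = ∑ j ∈ Finset.range (k + 1), max (ws j - μ) 0
        + ∑ j ∈ Finset.Ico (k + 1) d, max (ws j - μ) 0 := by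
    rw [Finset.range_eq_Ico, ← Finset.sum_Ico_consecutive _ (Nat.zero_le (k + 1)) hk]
    rw [Finset.range_eq_Ico]
  have h2 : ∑ j ∈ Finset.Ico (k + 1) d, max (ws j - μ) 0 = 0 := by
    apply Finset.sum_eq_zero
    intro j hj
    have hj' : k + 1 ≤ j := (Finset.mem_Ico.mp hj).1
    have : ws j ≤ μ := le_trans (hmono _ _ hj') hμ_ge
    simp [max_eq_right, sub_nonpos.mpr this]
  have h1 : ∑ j ∈ Finset.range (k + 1), max (ws j - μ) 0
      = ∑ j ∈ Finset.range (k + 1), (ws j - μ) := by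
    apply Finset.sum_congr rfl
    intro j hj
    have hj' : j ≤ k := Nat.lt_succ_iff.mp (Finset.mem_range.mp hj)
    have : μ ≤ ws j := le_trans hμ_le (hmono _ _ hj')
    exact max_eq_left (sub_nonneg.mpr this)
  rw [hsplit, h2, h1, Finset.sum_sub_distrib, Finset.sum_const, Finset.card_range,
    Finset.sum_range_succ, nsmul_eq_mul]
  push_cast
  linarith
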